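/- Attainment of the worst-case distribution: Let T ∈ ℝ^{r×d} be nonzero, let the nominal P° on ℝ^d have zero mean, finite second moment, and identity covariance, and let ρ > 0. Let γ* be the unique γ > ‖T‖_op² satisfying Tr[((I − γ⁻¹ T Tᵀ)⁻¹ − I)²] = ρ², and let P* be the pushforward of P° under the linear map ξ ↦ (I − γ*⁻¹ Tᵀ T)⁻¹ ξ. Then P* lies in the W₂-ball of radius ρ around P° and attains the worst-case value: ∫‖Tξ‖² dP*(ξ) = sup{ ∫‖Tξ‖² dP(ξ) : P in the W₂-ball of radius ρ around P° } = γ*ρ² + γ*·Tr[(I − γ*⁻¹ T Tᵀ)⁻¹ − I]. -/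

import Mathlib

open Matrix MeasureTheory

noncomputable section

/-- Squared Euclidean norm of a finitely-indexed real vector. -/
def sqNorm {ι : Type*} [Fintype ι] (x : ι → ℝ) : ℝ := ∑ i, (x i) ^ 2

/-- `P` lies in the `W₂`-ball of radius `ρ` around `P0`: `P` is a probability measure
with finite second moment and there is a coupling of `P` and `P0` of cost at most `ρ²`. -/
def MemW2Ball {ι : Type*} [Fintype ι] (P P0 : Measure (ι → ℝ)) (ρ : ℝ) : Prop :=
  IsProbabilityMeasure P ∧
  (∫⁻ ξ, ENNReal.ofReal (sqNorm ξ) ∂P) < ⊤ ∧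
  ∃ μ : Measure ((ι → ℝ) × (ι → ℝ)), IsProbabilityMeasure μ ∧
    μ.map Prod.fst = P ∧ μ.map Prod.snd = P0 ∧
    (∫⁻ xy, ENNReal.ofReal (sqNorm fun i => xy.1 i - xy.2 i) ∂μ) ≤ ENNReal.ofReal (ρ ^ 2)

/-- The nominal distribution: a probability measure with finite second moment,
zero mean, and identity covariance. -/
def IsNominal {ι : Type*} [Fintype ι] [DecidableEq ι] (P0 : Measure (ι → ℝ)) : Prop :=
  IsProbabilityMeasure P0 ∧ Integrable (fun ξ => sqNorm ξ) P0 ∧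
  (∀ i, (∫ ξ, ξ i ∂P0) = 0) ∧
  (∀ i j, (∫ ξ, ξ i * ξ j ∂P0) = if i = j then (1 : ℝ) else 0)

/-- The set of worst-case mean-squared-error values `∫‖Tξ‖² dP` for `P` ranging over
the `W₂`-ball of radius `ρ` around `P0`. -/
def wcSet {ι : Type*} [Fintype ι] {r : ℕ} (T : Matrix (Fin r) ι ℝ)
    (P0 : Measure (ι → ℝ)) (ρ : ℝ) : Set ℝ :=
  {e | ∃ P, MemW2Ball P P0 ρ ∧ e = ∫ ξ, sqNorm (T.mulVec ξ) ∂P}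

/-- The squared operator (spectral) norm of a real matrix `T`, characterized as the least
`c ≥ 0` with `c·I − TᵀT ⪰ 0`. -/
def opNormSq {r d : ℕ} (T : Matrix (Fin r) (Fin d) ℝ) : ℝ :=
  sInf {c : ℝ | 0 ≤ c ∧ (c • (1 : Matrix (Fin d) (Fin d) ℝ) - Tᵀ * T).PosSemidef}

lemma sqNorm_nonneg {ι : Type*} [Fintype ι] (x : ι → ℝ) : 0 ≤ sqNorm x :=
  Finset.sum_nonneg fun i _ => sq_nonneg _

lemma sqNorm_dot {ι : Type*} [Fintype ι] (x : ι → ℝ) : sqNorm x = x ⬝ᵥ x := by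
  simp [sqNorm, dotProduct, sq]

lemma dot_self_nonneg {ι : Type*} [Fintype ι] (x : ι → ℝ) : 0 ≤ x ⬝ᵥ x := by
  rw [← sqNorm_dot]; exact sqNorm_nonneg x

lemma dot_self_pos {ι : Type*} [Fintype ι] {x : ι → ℝ} (hx : x ≠ 0) : 0 < x ⬝ᵥ x := by
  rcases (dot_self_nonneg x).lt_or_eq with h | h
  · exact h
  · exfalso; apply hx; funext i
    have h0 : ∑ i, (x i)^2 = 0 := by rw [← sqNorm_dot] at h; simpa [sqNorm] using h.symm
    have := (Finset.sum_eq_zero_iff_of_nonneg (fun i _ => sq_nonneg (x i))).mp h0 i (Finset.mem_univ i)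
    exact pow_eq_zero_iff (by norm_num) |>.mp this

lemma dot_sq_le {ι : Type*} [Fintype ι] (x y : ι → ℝ) : (x ⬝ᵥ y)^2 ≤ (x ⬝ᵥ x) * (y ⬝ᵥ y) := by
  simpa [dotProduct, sq] using Finset.sum_mul_sq_le_sq_mul_sq Finset.univ x y

lemma sqNorm_mulVec {r d : ℕ} (T : Matrix (Fin r) (Fin d) ℝ) (x : Fin d → ℝ) :
    sqNorm (T *ᵥ x) = x ⬝ᵥ (Tᵀ * T) *ᵥ x := by
  rw [sqNorm_dot, ← Matrix.mulVec_mulVec, Matrix.dotProduct_mulVec x Tᵀ, Matrix.vecMul_transpose]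

lemma quad_le_trace {r d : ℕ} (T : Matrix (Fin r) (Fin d) ℝ) (x : Fin d → ℝ) :
    x ⬝ᵥ (Tᵀ * T) *ᵥ x ≤ (Tᵀ * T).trace * (x ⬝ᵥ x) := by
  rw [← sqNorm_mulVec]
  have htr : (Tᵀ * T).trace = ∑ i, ∑ j, (T i j)^2 := by
    simp [Matrix.trace, Matrix.diag, Matrix.mul_apply, sq]
    rw [Finset.sum_comm]
  have hb : ∀ i, ((T *ᵥ x) i)^2 ≤ (∑ j, (T i j)^2) * (x ⬝ᵥ x) := by
    intro i
    have := Finset.sum_mul_sq_le_sq_mul_sq Finset.univ (T i) x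
    simpa [Matrix.mulVec, dotProduct, sq] using this
  calc sqNorm (T *ᵥ x) ≤ ∑ i, (∑ j, (T i j)^2) * (x ⬝ᵥ x) :=
        Finset.sum_le_sum fun i _ => hb i
    _ = (Tᵀ * T).trace * (x ⬝ᵥ x) := by rw [htr, Finset.sum_mul]

lemma trace_mem_opSet {r d : ℕ} (T : Matrix (Fin r) (Fin d) ℝ) :
    0 ≤ (Tᵀ * T).trace ∧ ((Tᵀ * T).trace • (1 : Matrix (Fin d) (Fin d) ℝ) - Tᵀ * T).PosSemidef := by
  have htr : (Tᵀ * T).trace = ∑ j, ∑ i, (T i j)^2 := by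
    simp [Matrix.trace, Matrix.diag, Matrix.mul_apply, sq]
  constructor
  · rw [htr]; positivity
  · rw [Matrix.posSemidef_iff_dotProduct_mulVec]; constructor
    · have h1 : (Tᵀ * T).IsHermitian := Matrix.isHermitian_conjTranspose_mul_self T
      have h2 : (((Tᵀ*T).trace) • (1 : Matrix (Fin d) (Fin d) ℝ)).IsHermitian := by
        unfold Matrix.IsHermitian; simp
      exact h2.sub h1
    · intro x
      have := quad_le_trace T x
      simp only [Matrix.sub_mulVec, Matrix.smul_mulVec, Matrix.one_mulVec,
        dotProduct_sub, dotProduct_smul, star_trivial]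
      rw [smul_eq_mul]
      linarith

lemma opNormSq_lt_elim {r d : ℕ} (T : Matrix (Fin r) (Fin d) ℝ) {γ : ℝ} (h : opNormSq T < γ) :
    ∃ c, 0 ≤ c ∧ c < γ ∧ (c • (1 : Matrix (Fin d) (Fin d) ℝ) - Tᵀ * T).PosSemidef := by
  set s := {c : ℝ | 0 ≤ c ∧ (c • (1 : Matrix (Fin d) (Fin d) ℝ) - Tᵀ * T).PosSemidef}
  have hne : s.Nonempty := ⟨(Tᵀ*T).trace, (trace_mem_opSet T).1, (trace_mem_opSet T).2⟩
  have hbdd : BddBelow s := ⟨0, fun c hc => hc.1⟩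
  have := (csInf_lt_iff hbdd hne).mp h
  obtain ⟨c, hc, hlt⟩ := this
  exact ⟨c, hc.1, hlt, hc.2⟩

lemma posDef_S {r d : ℕ} (T : Matrix (Fin r) (Fin d) ℝ) {γ : ℝ} (h : opNormSq T < γ) :
    (γ • (1 : Matrix (Fin d) (Fin d) ℝ) - Tᵀ * T).PosDef := by
  obtain ⟨c, hc0, hcγ, hpsd⟩ := opNormSq_lt_elim T h
  rw [Matrix.posDef_iff_dotProduct_mulVec]
  constructor
  · have h1 : (Tᵀ * T).IsHermitian := Matrix.isHermitian_conjTranspose_mul_self T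
    have h2 : ((γ : ℝ) • (1 : Matrix (Fin d) (Fin d) ℝ)).IsHermitian := by
      unfold Matrix.IsHermitian; simp
    exact h2.sub h1
  · intro x hx
    have hq := hpsd.dotProduct_mulVec_nonneg x
    simp only [Matrix.sub_mulVec, Matrix.smul_mulVec, Matrix.one_mulVec,
      dotProduct_sub, dotProduct_smul, star_trivial, smul_eq_mul] at hq ⊢
    have hxx := dot_self_pos hx
    nlinarith

lemma opNormSq_pos_side {r d : ℕ} (T : Matrix (Fin r) (Fin d) ℝ) {γ : ℝ} (h : opNormSq T < γ) :
    0 < γ := by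
  obtain ⟨c, hc0, hcγ, _⟩ := opNormSq_lt_elim T h
  linarith

lemma psd_transfer {r d : ℕ} (T : Matrix (Fin r) (Fin d) ℝ) {c : ℝ} (hc0 : 0 ≤ c)
    (hpsd : (c • (1 : Matrix (Fin d) (Fin d) ℝ) - Tᵀ * T).PosSemidef) (x : Fin r → ℝ) :
    Tᵀ *ᵥ x ⬝ᵥ Tᵀ *ᵥ x ≤ c * (x ⬝ᵥ x) := by
  set u := Tᵀ *ᵥ x with hu
  have hMu : u ⬝ᵥ (Tᵀ * T) *ᵥ u ≤ c * (u ⬝ᵥ u) := by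
    have hq := hpsd.dotProduct_mulVec_nonneg u
    simp only [Matrix.sub_mulVec, Matrix.smul_mulVec, Matrix.one_mulVec,
      dotProduct_sub, dotProduct_smul, star_trivial, smul_eq_mul] at hq
    linarith
  have hcs : (x ⬝ᵥ T *ᵥ u)^2 ≤ (x ⬝ᵥ x) * ((T *ᵥ u) ⬝ᵥ (T *ᵥ u)) := dot_sq_le x (T *ᵥ u)
  have hTu : (T *ᵥ u) ⬝ᵥ (T *ᵥ u) = u ⬝ᵥ (Tᵀ * T) *ᵥ u := by
    rw [← sqNorm_dot, sqNorm_mulVec]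
  have hxTu : x ⬝ᵥ T *ᵥ u = u ⬝ᵥ u := by
    rw [Matrix.dotProduct_mulVec, ← Matrix.mulVec_transpose, ← hu]
  rcases (dot_self_nonneg u).lt_or_eq with hpos | hzero
  · have h1 : (u ⬝ᵥ u)^2 ≤ (x ⬝ᵥ x) * (c * (u ⬝ᵥ u)) := by
      calc (u ⬝ᵥ u)^2 = (x ⬝ᵥ T *ᵥ u)^2 := by rw [hxTu]
        _ ≤ (x ⬝ᵥ x) * ((T *ᵥ u) ⬝ᵥ (T *ᵥ u)) := hcs
        _ ≤ (x ⬝ᵥ x) * (c * (u ⬝ᵥ u)) := by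
            apply mul_le_mul_of_nonneg_left _ (dot_self_nonneg x)
            rw [hTu]; exact hMu
    nlinarith
  · rw [← hzero]
    exact mul_nonneg hc0 (dot_self_nonneg x)

lemma psd_transfer' {r d : ℕ} (T : Matrix (Fin r) (Fin d) ℝ) {c : ℝ} (hc0 : 0 ≤ c)
    (hpsd : (c • (1 : Matrix (Fin d) (Fin d) ℝ) - Tᵀ * T).PosSemidef) :
    (c • (1 : Matrix (Fin r) (Fin r) ℝ) - T * Tᵀ).PosSemidef := by
  rw [Matrix.posSemidef_iff_dotProduct_mulVec]
  constructor
  · have h1 : (T * Tᵀ).IsHermitian := by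
      have := Matrix.isHermitian_conjTranspose_mul_self Tᵀ
      simpa using this
    have h2 : ((c : ℝ) • (1 : Matrix (Fin r) (Fin r) ℝ)).IsHermitian := by
      unfold Matrix.IsHermitian; simp
    exact h2.sub h1
  · intro x
    have hle := psd_transfer T hc0 hpsd x
    have hxu : x ⬝ᵥ (T * Tᵀ) *ᵥ x = Tᵀ *ᵥ x ⬝ᵥ Tᵀ *ᵥ x := by
      have h2 := sqNorm_mulVec Tᵀ x
      rw [sqNorm_dot, Matrix.transpose_transpose] at h2
      exact h2.symm
    simp only [Matrix.sub_mulVec, Matrix.smul_mulVec, Matrix.one_mulVec,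
      dotProduct_sub, dotProduct_smul, star_trivial, smul_eq_mul]
    rw [hxu]
    linarith

lemma opNormSq_transpose_le {r d : ℕ} (T : Matrix (Fin r) (Fin d) ℝ) :
    opNormSq Tᵀ ≤ opNormSq T := by
  have hne : {c : ℝ | 0 ≤ c ∧ (c • (1 : Matrix (Fin d) (Fin d) ℝ) - Tᵀ * T).PosSemidef}.Nonempty :=
    ⟨(Tᵀ*T).trace, (trace_mem_opSet T).1, (trace_mem_opSet T).2⟩
  have hbdd : BddBelow {c : ℝ | 0 ≤ c ∧ (c • (1 : Matrix (Fin r) (Fin r) ℝ) - Tᵀᵀ * Tᵀ).PosSemidef} :=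
    ⟨0, fun c hc => hc.1⟩
  apply csInf_le_csInf hbdd hne
  rintro c ⟨hc0, hpsd⟩
  refine ⟨hc0, ?_⟩
  have := psd_transfer' T hc0 hpsd
  simpa [Matrix.transpose_transpose] using this

lemma posDef_R {r d : ℕ} (T : Matrix (Fin r) (Fin d) ℝ) {γ : ℝ} (h : opNormSq T < γ) :
    (γ • (1 : Matrix (Fin r) (Fin r) ℝ) - T * Tᵀ).PosDef := by
  obtain ⟨c, hc0, hcγ, hpsd⟩ := opNormSq_lt_elim T h
  rw [Matrix.posDef_iff_dotProduct_mulVec]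
  constructor
  · have h1 : (T * Tᵀ).IsHermitian := by
      have := Matrix.isHermitian_conjTranspose_mul_self Tᵀ
      simpa using this
    have h2 : ((γ : ℝ) • (1 : Matrix (Fin r) (Fin r) ℝ)).IsHermitian := by
      unfold Matrix.IsHermitian; simp
    exact h2.sub h1
  · intro x hx
    set u := Tᵀ *ᵥ x with hu
    have hxu : x ⬝ᵥ (T * Tᵀ) *ᵥ x = u ⬝ᵥ u := by
      have h2 := sqNorm_mulVec Tᵀ x
      rw [sqNorm_dot, Matrix.transpose_transpose] at h2
      rw [hu]
      exact h2.symm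
    -- u⬝u ≤ c * (x⬝x)
    have huu : u ⬝ᵥ u ≤ c * (x ⬝ᵥ x) := by
      have hMu : u ⬝ᵥ (Tᵀ * T) *ᵥ u ≤ c * (u ⬝ᵥ u) := by
        have hq := hpsd.dotProduct_mulVec_nonneg u
        simp only [Matrix.sub_mulVec, Matrix.smul_mulVec, Matrix.one_mulVec,
          dotProduct_sub, dotProduct_smul, star_trivial, smul_eq_mul] at hq
        linarith
      have hcs : (x ⬝ᵥ T *ᵥ u)^2 ≤ (x ⬝ᵥ x) * ((T *ᵥ u) ⬝ᵥ (T *ᵥ u)) := dot_sq_le x (T *ᵥ u)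
      have hTu : (T *ᵥ u) ⬝ᵥ (T *ᵥ u) = u ⬝ᵥ (Tᵀ * T) *ᵥ u := by
        rw [← sqNorm_dot, sqNorm_mulVec]
      have hxTu : x ⬝ᵥ T *ᵥ u = u ⬝ᵥ u := by
        rw [Matrix.dotProduct_mulVec, ← Matrix.mulVec_transpose, ← hu]
      rcases (dot_self_nonneg u).lt_or_eq with hpos | hzero
      · have h1 : (u ⬝ᵥ u)^2 ≤ (x ⬝ᵥ x) * (c * (u ⬝ᵥ u)) := by
          calc (u ⬝ᵥ u)^2 = (x ⬝ᵥ T *ᵥ u)^2 := by rw [hxTu]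
            _ ≤ (x ⬝ᵥ x) * ((T *ᵥ u) ⬝ᵥ (T *ᵥ u)) := hcs
            _ ≤ (x ⬝ᵥ x) * (c * (u ⬝ᵥ u)) := by
                apply mul_le_mul_of_nonneg_left _ (dot_self_nonneg x)
                rw [hTu]; exact hMu
        nlinarith
      · rw [← hzero]
        exact mul_nonneg hc0 (dot_self_nonneg x)
    have hxx := dot_self_pos hx
    simp only [Matrix.sub_mulVec, Matrix.smul_mulVec, Matrix.one_mulVec,
      dotProduct_sub, dotProduct_smul, star_trivial, smul_eq_mul]
    rw [hxu]
    nlinarith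

lemma inv_sub_one_helper {n : ℕ} (M N : Matrix (Fin n) (Fin n) ℝ) (γ : ℝ)
    (hNS : N * (γ • (1 : Matrix (Fin n) (Fin n) ℝ) - M) = 1) : γ • N - 1 = N * M := by
  have h2 : N * (γ • (1 : Matrix (Fin n) (Fin n) ℝ)) - N * M = 1 := by
    rw [← Matrix.mul_sub]; exact hNS
  have h3 : N * (γ • (1 : Matrix (Fin n) (Fin n) ℝ)) = γ • N := by
    rw [Matrix.mul_smul, Matrix.mul_one]
  rw [h3] at h2
  linear_combination (norm := abel) h2

section Algebra
variable {r d : ℕ} (T : Matrix (Fin r) (Fin d) ℝ) {γ : ℝ} (hγ : opNormSq T < γ)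
include hγ

lemma det_S_unit : IsUnit (γ • (1 : Matrix (Fin d) (Fin d) ℝ) - Tᵀ * T).det :=
  isUnit_iff_ne_zero.mpr (ne_of_gt (posDef_S T hγ).det_pos)

lemma det_R_unit : IsUnit (γ • (1 : Matrix (Fin r) (Fin r) ℝ) - T * Tᵀ).det :=
  isUnit_iff_ne_zero.mpr (ne_of_gt (posDef_R T hγ).det_pos)

lemma SN_eq_one : (γ • (1 : Matrix (Fin d) (Fin d) ℝ) - Tᵀ * T) * (γ • (1 : Matrix (Fin d) (Fin d) ℝ) - Tᵀ * T)⁻¹ = 1 :=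
  Matrix.mul_nonsing_inv _ (det_S_unit T hγ)

lemma NS_eq_one : (γ • (1 : Matrix (Fin d) (Fin d) ℝ) - Tᵀ * T)⁻¹ * (γ • (1 : Matrix (Fin d) (Fin d) ℝ) - Tᵀ * T) = 1 :=
  Matrix.nonsing_inv_mul _ (det_S_unit T hγ)

lemma A_eq : ((1 : Matrix (Fin d) (Fin d) ℝ) - γ⁻¹ • (Tᵀ * T))⁻¹
    = γ • (γ • (1 : Matrix (Fin d) (Fin d) ℝ) - Tᵀ * T)⁻¹ := by
  have hγ0 : γ ≠ 0 := ne_of_gt (opNormSq_pos_side T hγ)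
  apply Matrix.inv_eq_right_inv
  have h1 : (1 : Matrix (Fin d) (Fin d) ℝ) - γ⁻¹ • (Tᵀ * T)
      = γ⁻¹ • (γ • (1 : Matrix (Fin d) (Fin d) ℝ) - Tᵀ * T) := by
    rw [smul_sub, smul_smul, inv_mul_cancel₀ hγ0, one_smul]
  rw [h1, Matrix.smul_mul, Matrix.mul_smul, SN_eq_one T hγ, smul_smul,
    inv_mul_cancel₀ hγ0, one_smul]

lemma B_eq : ((1 : Matrix (Fin r) (Fin r) ℝ) - γ⁻¹ • (T * Tᵀ))⁻¹
    = γ • (γ • (1 : Matrix (Fin r) (Fin r) ℝ) - T * Tᵀ)⁻¹ := by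
  have := A_eq (T := Tᵀ) (γ := γ)
  simp only [Matrix.transpose_transpose] at this
  exact this (lt_of_le_of_lt (opNormSq_transpose_le T) hγ)

lemma Aminus_eq : γ • (γ • (1 : Matrix (Fin d) (Fin d) ℝ) - Tᵀ * T)⁻¹ - 1
    = (γ • (1 : Matrix (Fin d) (Fin d) ℝ) - Tᵀ * T)⁻¹ * (Tᵀ * T) := by
  exact inv_sub_one_helper _ _ _ (NS_eq_one T hγ)

lemma Bminus_eq : γ • (γ • (1 : Matrix (Fin r) (Fin r) ℝ) - T * Tᵀ)⁻¹ - 1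
    = (γ • (1 : Matrix (Fin r) (Fin r) ℝ) - T * Tᵀ)⁻¹ * (T * Tᵀ) := by
  have := Aminus_eq (T := Tᵀ) (lt_of_le_of_lt (opNormSq_transpose_le T) hγ)
  simpa [Matrix.transpose_transpose] using this

lemma N_symm : ((γ • (1 : Matrix (Fin d) (Fin d) ℝ) - Tᵀ * T)⁻¹)ᵀ
    = (γ • (1 : Matrix (Fin d) (Fin d) ℝ) - Tᵀ * T)⁻¹ := by
  rw [Matrix.transpose_nonsing_inv]
  congr 1
  have h := (posDef_S T hγ).1.eq
  conv_rhs => rw [← h]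
  ext i j
  simp [Matrix.conjTranspose_apply]

lemma key_identity :
    (γ • (γ • (1 : Matrix (Fin d) (Fin d) ℝ) - Tᵀ * T)⁻¹) * (Tᵀ * T) * (γ • (γ • (1 : Matrix (Fin d) (Fin d) ℝ) - Tᵀ * T)⁻¹)
    = γ • ((γ • (γ • (1 : Matrix (Fin d) (Fin d) ℝ) - Tᵀ * T)⁻¹ - 1) * (γ • (γ • (1 : Matrix (Fin d) (Fin d) ℝ) - Tᵀ * T)⁻¹ - 1))
      + γ • (γ • (γ • (1 : Matrix (Fin d) (Fin d) ℝ) - Tᵀ * T)⁻¹ - 1) := by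
  set S := γ • (1 : Matrix (Fin d) (Fin d) ℝ) - Tᵀ * T with hS
  set N := S⁻¹ with hN
  set M := Tᵀ * T with hM
  have hNS : N * S = 1 := NS_eq_one T hγ
  have hAm : γ • N - 1 = N * M := Aminus_eq T hγ
  have hNM1 : N * M + 1 = γ • N := by rw [← hAm]; abel
  rw [hAm]
  calc (γ • N) * M * (γ • N) = (γ * γ) • (N * M * N) := by
        rw [Matrix.smul_mul, Matrix.smul_mul, Matrix.mul_smul, smul_smul]
    _ = γ • (N * M * (γ • N)) := by rw [Matrix.mul_smul, smul_smul]
    _ = γ • (N * M * (N * M + 1)) := by rw [hNM1]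
    _ = γ • (N * M * (N * M)) + γ • (N * M) := by rw [Matrix.mul_add, mul_one, smul_add]

lemma TN_eq : T * (γ • (1 : Matrix (Fin d) (Fin d) ℝ) - Tᵀ * T)⁻¹
    = (γ • (1 : Matrix (Fin r) (Fin r) ℝ) - T * Tᵀ)⁻¹ * T := by
  set S := γ • (1 : Matrix (Fin d) (Fin d) ℝ) - Tᵀ * T with hS
  set R := γ • (1 : Matrix (Fin r) (Fin r) ℝ) - T * Tᵀ with hR
  have hRT : R * T = T * S := by
    rw [hS, hR, Matrix.sub_mul, Matrix.mul_sub, Matrix.smul_mul, Matrix.mul_smul,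
      Matrix.one_mul, Matrix.mul_one, Matrix.mul_assoc]
  have hNrR : R⁻¹ * R = 1 := Matrix.nonsing_inv_mul _ (det_R_unit T hγ)
  have hSN : S * S⁻¹ = 1 := SN_eq_one T hγ
  calc T * S⁻¹ = (R⁻¹ * R) * (T * S⁻¹) := by rw [hNrR, Matrix.one_mul]
    _ = R⁻¹ * (R * T) * S⁻¹ := by rw [Matrix.mul_assoc, Matrix.mul_assoc, Matrix.mul_assoc]
    _ = R⁻¹ * (T * S) * S⁻¹ := by rw [hRT]
    _ = R⁻¹ * T * (S * S⁻¹) := by rw [Matrix.mul_assoc, Matrix.mul_assoc, Matrix.mul_assoc]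
    _ = R⁻¹ * T := by rw [hSN, Matrix.mul_assoc, Matrix.mul_one]

lemma trace_eq_1 : (γ • (γ • (1 : Matrix (Fin d) (Fin d) ℝ) - Tᵀ * T)⁻¹ - 1).trace
    = (γ • (γ • (1 : Matrix (Fin r) (Fin r) ℝ) - T * Tᵀ)⁻¹ - 1).trace := by
  rw [Aminus_eq T hγ, Bminus_eq T hγ]
  set N := (γ • (1 : Matrix (Fin d) (Fin d) ℝ) - Tᵀ * T)⁻¹
  set Nr := (γ • (1 : Matrix (Fin r) (Fin r) ℝ) - T * Tᵀ)⁻¹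
  have hTN : T * N = Nr * T := TN_eq T hγ
  calc (N * (Tᵀ * T)).trace = ((N * Tᵀ) * T).trace := by rw [Matrix.mul_assoc]
    _ = (T * (N * Tᵀ)).trace := Matrix.trace_mul_comm _ _
    _ = ((T * N) * Tᵀ).trace := by rw [Matrix.mul_assoc]
    _ = ((Nr * T) * Tᵀ).trace := by rw [hTN]
    _ = (Nr * (T * Tᵀ)).trace := by rw [Matrix.mul_assoc]

lemma trace_eq_2 :
    ((γ • (γ • (1 : Matrix (Fin d) (Fin d) ℝ) - Tᵀ * T)⁻¹ - 1) * (γ • (γ • (1 : Matrix (Fin d) (Fin d) ℝ) - Tᵀ * T)⁻¹ - 1)).trace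
    = ((γ • (γ • (1 : Matrix (Fin r) (Fin r) ℝ) - T * Tᵀ)⁻¹ - 1) * (γ • (γ • (1 : Matrix (Fin r) (Fin r) ℝ) - T * Tᵀ)⁻¹ - 1)).trace := by
  rw [Aminus_eq T hγ, Bminus_eq T hγ]
  set N := (γ • (1 : Matrix (Fin d) (Fin d) ℝ) - Tᵀ * T)⁻¹
  set Nr := (γ • (1 : Matrix (Fin r) (Fin r) ℝ) - T * Tᵀ)⁻¹
  have hTN : T * N = Nr * T := TN_eq T hγ
  calc ((N * (Tᵀ * T)) * (N * (Tᵀ * T))).trace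
      = ((N * Tᵀ) * (T * N * Tᵀ * T)).trace := by
        simp only [Matrix.mul_assoc]
    _ = ((T * N * Tᵀ * T) * (N * Tᵀ)).trace := Matrix.trace_mul_comm _ _
    _ = ((T * N) * Tᵀ * ((T * N) * Tᵀ)).trace := by simp only [Matrix.mul_assoc]
    _ = ((Nr * T) * Tᵀ * ((Nr * T) * Tᵀ)).trace := by rw [hTN]
    _ = ((Nr * (T * Tᵀ)) * (Nr * (T * Tᵀ))).trace := by simp only [Matrix.mul_assoc]

end Algebra

section MeasureLemmas

lemma continuous_sqNorm {ι : Type*} [Fintype ι] : Continuous (sqNorm (ι := ι)) := by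
  unfold sqNorm
  exact continuous_finset_sum _ fun i _ => (continuous_apply i).pow 2

lemma continuous_mulVec {m d : ℕ} (C : Matrix (Fin m) (Fin d) ℝ) :
    Continuous (fun x : Fin d → ℝ => C *ᵥ x) := by
  have : Continuous (fun x : Fin d → ℝ => C.mulVecLin x) :=
    C.mulVecLin.continuous_of_finiteDimensional
  simpa [Matrix.mulVecLin_apply] using this

lemma measurable_mulVec {m d : ℕ} (C : Matrix (Fin m) (Fin d) ℝ) :
    Measurable (fun x : Fin d → ℝ => C *ᵥ x) := (continuous_mulVec C).measurable

lemma continuous_dotQuad {d : ℕ} (Q : Matrix (Fin d) (Fin d) ℝ) :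
    Continuous (fun x : Fin d → ℝ => x ⬝ᵥ Q *ᵥ x) := by
  simp only [dotProduct, Matrix.mulVec]
  apply continuous_finset_sum
  intro i _
  apply (continuous_apply i).mul
  apply continuous_finset_sum
  intro j _
  exact continuous_const.mul (continuous_apply j)

end MeasureLemmas

section Nominal
variable {d : ℕ} {P0 : Measure (Fin d → ℝ)} (hP0 : IsNominal P0)
include hP0

lemma integrable_entry_mul (i j : Fin d) : Integrable (fun ξ => ξ i * ξ j) P0 := by
  apply Integrable.mono hP0.2.1
  · exact ((measurable_pi_apply i).mul (measurable_pi_apply j)).aestronglyMeasurable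
  · filter_upwards with ξ
    have h1 : (ξ i)^2 ≤ sqNorm ξ := by
      unfold sqNorm
      exact Finset.single_le_sum (fun k _ => sq_nonneg (ξ k)) (Finset.mem_univ i)
    have h2 : (ξ j)^2 ≤ sqNorm ξ := by
      unfold sqNorm
      exact Finset.single_le_sum (fun k _ => sq_nonneg (ξ k)) (Finset.mem_univ j)
    have h0 : 0 ≤ sqNorm ξ := sqNorm_nonneg ξ
    rw [Real.norm_eq_abs, Real.norm_eq_abs, abs_mul, abs_of_nonneg h0]
    nlinarith [abs_nonneg (ξ i), abs_nonneg (ξ j), sq_abs (ξ i), sq_abs (ξ j),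
      sq_nonneg (|ξ i| - |ξ j|)]

lemma integrable_quadform (Q : Matrix (Fin d) (Fin d) ℝ) :
    Integrable (fun ξ => ξ ⬝ᵥ Q *ᵥ ξ) P0 := by
  have hfun : (fun ξ : Fin d → ℝ => ξ ⬝ᵥ Q *ᵥ ξ)
      = fun ξ => ∑ i, ∑ j, Q i j * (ξ i * ξ j) := by
    funext ξ
    simp only [dotProduct, Matrix.mulVec, Finset.mul_sum]
    exact Finset.sum_congr rfl fun i _ => Finset.sum_congr rfl fun j _ => by ring
  rw [hfun]
  apply integrable_finset_sum
  intro i _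
  apply integrable_finset_sum
  intro j _
  exact (integrable_entry_mul hP0 i j).const_mul _

lemma integral_quadform (Q : Matrix (Fin d) (Fin d) ℝ) :
    ∫ ξ, ξ ⬝ᵥ Q *ᵥ ξ ∂P0 = Q.trace := by
  have hfun : (fun ξ : Fin d → ℝ => ξ ⬝ᵥ Q *ᵥ ξ)
      = fun ξ => ∑ i, ∑ j, Q i j * (ξ i * ξ j) := by
    funext ξ
    simp only [dotProduct, Matrix.mulVec, Finset.mul_sum]
    exact Finset.sum_congr rfl fun i _ => Finset.sum_congr rfl fun j _ => by ring
  rw [hfun]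
  rw [integral_finset_sum (f := fun i (ξ : Fin d → ℝ) => ∑ j, Q i j * (ξ i * ξ j)) _ (fun i _ => integrable_finset_sum _
    (fun j _ => (integrable_entry_mul hP0 i j).const_mul _))]
  have : ∀ i, (∫ ξ, ∑ j, Q i j * (ξ i * ξ j) ∂P0) = Q i i := by
    intro i
    rw [integral_finset_sum (f := fun j (ξ : Fin d → ℝ) => Q i j * (ξ i * ξ j)) _ (fun j _ => (integrable_entry_mul hP0 i j).const_mul _)]
    have : ∀ j, (∫ ξ, Q i j * (ξ i * ξ j) ∂P0) = if i = j then Q i j else 0 := by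
      intro j
      rw [MeasureTheory.integral_const_mul, hP0.2.2.2 i j]
      split <;> simp
    simp_rw [this]
    simp
  simp_rw [this]
  rfl

lemma integrable_sqNorm_mulVec {m : ℕ} (C : Matrix (Fin m) (Fin d) ℝ) :
    Integrable (fun ξ => sqNorm (C *ᵥ ξ)) P0 := by
  simp_rw [sqNorm_mulVec]
  exact integrable_quadform hP0 _

lemma integral_sqNorm_mulVec {m : ℕ} (C : Matrix (Fin m) (Fin d) ℝ) :
    ∫ ξ, sqNorm (C *ᵥ ξ) ∂P0 = (Cᵀ * C).trace := by
  simp_rw [sqNorm_mulVec]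
  exact integral_quadform hP0 _

end Nominal

lemma dot_mulVec_symm {n : ℕ} (S : Matrix (Fin n) (Fin n) ℝ) (h : Sᵀ = S) (v w : Fin n → ℝ) :
    v ⬝ᵥ S *ᵥ w = (S *ᵥ v) ⬝ᵥ w := by
  rw [Matrix.dotProduct_mulVec]
  congr 1
  conv_lhs => rw [← h]
  rw [Matrix.vecMul_transpose]

section Algebra2
variable {r d : ℕ} (T : Matrix (Fin r) (Fin d) ℝ) {γ : ℝ} (hγ : opNormSq T < γ)
include hγ

lemma S_symm : (γ • (1 : Matrix (Fin d) (Fin d) ℝ) - Tᵀ * T)ᵀ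
    = γ • (1 : Matrix (Fin d) (Fin d) ℝ) - Tᵀ * T := by
  have h := (posDef_S T hγ).1.eq
  conv_rhs => rw [← h]
  ext i j
  simp [Matrix.conjTranspose_apply]

lemma pointwise_ineq (x y : Fin d → ℝ) :
    sqNorm (T *ᵥ x) ≤ γ * sqNorm (x - y)
      + γ * (y ⬝ᵥ (γ • (γ • (1 : Matrix (Fin d) (Fin d) ℝ) - Tᵀ * T)⁻¹ - 1) *ᵥ y) := by
  set M := Tᵀ * T with hM
  set S := γ • (1 : Matrix (Fin d) (Fin d) ℝ) - M with hS
  set A := γ • S⁻¹ with hA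
  have hSA : S * A = γ • (1 : Matrix (Fin d) (Fin d) ℝ) := by
    rw [hA, Matrix.mul_smul, SN_eq_one T hγ]
  have hSAy : S *ᵥ (A *ᵥ y) = γ • y := by
    rw [Matrix.mulVec_mulVec, hSA, Matrix.smul_mulVec, Matrix.one_mulVec]
  have hsymm : Sᵀ = S := S_symm T hγ
  have hpsd : 0 ≤ (x - A *ᵥ y) ⬝ᵥ S *ᵥ (x - A *ᵥ y) := by
    have := (posDef_S T hγ).posSemidef.dotProduct_mulVec_nonneg (x - A *ᵥ y)
    simpa using this
  have h1 : sqNorm (T *ᵥ x) = x ⬝ᵥ M *ᵥ x := sqNorm_mulVec T x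
  have h2 : x ⬝ᵥ S *ᵥ x = γ * (x ⬝ᵥ x) - x ⬝ᵥ M *ᵥ x := by
    rw [hS, Matrix.sub_mulVec, Matrix.smul_mulVec, Matrix.one_mulVec,
      dotProduct_sub, dotProduct_smul, smul_eq_mul]
  have h3 : sqNorm (x - y) = x ⬝ᵥ x - 2*(x ⬝ᵥ y) + y ⬝ᵥ y := by
    rw [sqNorm_dot, sub_dotProduct, dotProduct_sub, dotProduct_sub, dotProduct_comm y x]
    ring
  have h4 : y ⬝ᵥ (A - 1) *ᵥ y = y ⬝ᵥ A *ᵥ y - y ⬝ᵥ y := by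
    rw [Matrix.sub_mulVec, Matrix.one_mulVec, dotProduct_sub]
  have ha : S *ᵥ (x - A *ᵥ y) = S *ᵥ x - γ • y := by
    rw [Matrix.mulVec_sub, hSAy]
  have hb : (x - A *ᵥ y) ⬝ᵥ (S *ᵥ x - γ • y)
      = x ⬝ᵥ S *ᵥ x - x ⬝ᵥ (γ • y) - ((A *ᵥ y) ⬝ᵥ S *ᵥ x - (A *ᵥ y) ⬝ᵥ (γ • y)) := by
    rw [sub_dotProduct, dotProduct_sub, dotProduct_sub]
  have hc : (A *ᵥ y) ⬝ᵥ S *ᵥ x = γ * (y ⬝ᵥ x) := by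
    rw [dot_mulVec_symm S hsymm, hSAy, smul_dotProduct, smul_eq_mul]
  have hd : x ⬝ᵥ (γ • y) = γ * (x ⬝ᵥ y) := by rw [dotProduct_smul, smul_eq_mul]
  have he : (A *ᵥ y) ⬝ᵥ (γ • y) = γ * (y ⬝ᵥ A *ᵥ y) := by
    rw [dotProduct_smul, smul_eq_mul, dotProduct_comm]
  have hcomm : y ⬝ᵥ x = x ⬝ᵥ y := dotProduct_comm y x
  rw [ha, hb] at hpsd
  rw [h1, h3, h4]
  rw [hc, hd, he, h2, hcomm] at hpsd
  linarith
end Algebra2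

section MainProof

theorem stmt_5' {r d : ℕ} (T : Matrix (Fin r) (Fin d) ℝ) (hT : T ≠ 0)
    (P0 : Measure (Fin d → ℝ)) (hP0 : IsNominal P0) (ρ : ℝ) (hρ : 0 < ρ)
    (γs : ℝ) (hγs : opNormSq T < γs)
    (hγeq : ((((1 : Matrix (Fin r) (Fin r) ℝ) - γs⁻¹ • (T * Tᵀ))⁻¹ - 1) ^ 2).trace = ρ ^ 2) :
    MemW2Ball
        (P0.map fun ξ => (((1 : Matrix (Fin d) (Fin d) ℝ) - γs⁻¹ • (Tᵀ * T))⁻¹).mulVec ξ)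
        P0 ρ ∧
      (∫ ξ, sqNorm (T.mulVec ξ)
          ∂(P0.map fun ξ =>
              (((1 : Matrix (Fin d) (Fin d) ℝ) - γs⁻¹ • (Tᵀ * T))⁻¹).mulVec ξ)) =
        sSup (wcSet T P0 ρ) ∧
      sSup (wcSet T P0 ρ) =
        γs * ρ ^ 2 +
          γs * (((1 : Matrix (Fin r) (Fin r) ℝ) - γs⁻¹ • (T * Tᵀ))⁻¹ - 1).trace := by
  have hγ : opNormSq T < γs := hγs
  have hγpos : 0 < γs := opNormSq_pos_side T hγ
  have hA : ((1 : Matrix (Fin d) (Fin d) ℝ) - γs⁻¹ • (Tᵀ * T))⁻¹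
      = γs • (γs • (1 : Matrix (Fin d) (Fin d) ℝ) - Tᵀ * T)⁻¹ := A_eq T hγ
  have hB : ((1 : Matrix (Fin r) (Fin r) ℝ) - γs⁻¹ • (T * Tᵀ))⁻¹
      = γs • (γs • (1 : Matrix (Fin r) (Fin r) ℝ) - T * Tᵀ)⁻¹ := B_eq T hγ
  set M := Tᵀ * T with hM
  set N := (γs • (1 : Matrix (Fin d) (Fin d) ℝ) - Tᵀ * T)⁻¹ with hN
  set Nr := (γs • (1 : Matrix (Fin r) (Fin r) ℝ) - T * Tᵀ)⁻¹ with hNr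
  have hsymmN : Nᵀ = N := N_symm T hγ
  have hAm : γs • N - 1 = N * M := Aminus_eq T hγ
  have hAmsym : (γs • N - 1)ᵀ = γs • N - 1 := by
    rw [Matrix.transpose_sub, Matrix.transpose_smul, hsymmN, Matrix.transpose_one]
  -- trace facts
  have htr2 : ((γs • N - 1) * (γs • N - 1)).trace = ρ ^ 2 := by
    rw [hB, pow_two] at hγeq
    exact (trace_eq_2 T hγ).trans hγeq
  have htr1 : (γs • Nr - 1).trace = (γs • N - 1).trace := (trace_eq_1 T hγ).symm
  haveI hP0prob : IsProbabilityMeasure P0 := hP0.1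
  have hmeasA : Measurable (fun ξ : Fin d → ℝ => (γs • N) *ᵥ ξ) := measurable_mulVec _
  have hmapA : (fun ξ : Fin d → ℝ =>
      (((1 : Matrix (Fin d) (Fin d) ℝ) - γs⁻¹ • (Tᵀ * T))⁻¹).mulVec ξ)
      = fun ξ => (γs • N) *ᵥ ξ := by
    funext ξ; rw [hA]
  have hTcont : Continuous (fun x : Fin d → ℝ => T *ᵥ x) := continuous_mulVec T
  have hcT : Continuous (fun ξ : Fin d → ℝ => sqNorm (T *ᵥ ξ)) :=
    continuous_sqNorm.comp hTcont
  have hpairm : Measurable (fun ξ : Fin d → ℝ => ((γs • N) *ᵥ ξ, ξ)) :=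
    hmeasA.prodMk measurable_id
  have hmofsq : Measurable (fun ξ : Fin d → ℝ => ENNReal.ofReal (sqNorm ξ)) :=
    ENNReal.measurable_ofReal.comp continuous_sqNorm.measurable
  have hmofsqT : Measurable (fun x : Fin d → ℝ => ENNReal.ofReal (sqNorm (T *ᵥ x))) :=
    ENNReal.measurable_ofReal.comp hcT.measurable
  -- integrals over P0
  have c1 : ∫ ξ, sqNorm ((γs • N - 1) *ᵥ ξ) ∂P0 = ρ ^ 2 := by
    rw [integral_sqNorm_mulVec hP0, hAmsym, htr2]
  have c3 : ∫ ξ, ξ ⬝ᵥ (γs • N - 1) *ᵥ ξ ∂P0 = (γs • N - 1).trace :=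
    integral_quadform hP0 _
  have htrace : ((T * (γs • N))ᵀ * (T * (γs • N))).trace
      = γs * ρ ^ 2 + γs * (γs • N - 1).trace := by
    have e1 : (T * (γs • N))ᵀ * (T * (γs • N)) = (γs • N) * M * (γs • N) := by
      rw [Matrix.transpose_mul, Matrix.transpose_smul, hsymmN, hM]
      simp only [Matrix.mul_assoc]
    rw [e1, key_identity T hγ, Matrix.trace_add, Matrix.trace_smul, Matrix.trace_smul,
      htr2, smul_eq_mul, smul_eq_mul]
  have c2 : ∫ ξ, sqNorm (T *ᵥ ((γs • N) *ᵥ ξ)) ∂P0 = γs * ρ ^ 2 + γs * (γs • N - 1).trace := by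
    simp_rw [Matrix.mulVec_mulVec]
    rw [integral_sqNorm_mulVec hP0, htrace]
  -- membership in the ball
  have hball : MemW2Ball (P0.map fun ξ => (γs • N) *ᵥ ξ) P0 ρ := by
    refine ⟨Measure.isProbabilityMeasure_map hmeasA.aemeasurable, ?_, ?_⟩
    · rw [lintegral_map hmofsq hmeasA]
      rw [← ofReal_integral_eq_lintegral_ofReal (integrable_sqNorm_mulVec hP0 _)
        (Filter.Eventually.of_forall fun ξ => sqNorm_nonneg _)]
      exact ENNReal.ofReal_lt_top
    · refine ⟨P0.map (fun ξ => ((γs • N) *ᵥ ξ, ξ)), ?_, ?_, ?_, ?_⟩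
      · exact Measure.isProbabilityMeasure_map hpairm.aemeasurable
      · rw [Measure.map_map measurable_fst hpairm]
        rfl
      · rw [Measure.map_map measurable_snd hpairm]
        exact Measure.map_id
      · have hmeascost : Measurable (fun xy : (Fin d → ℝ) × (Fin d → ℝ) =>
            ENNReal.ofReal (sqNorm fun i => xy.1 i - xy.2 i)) := by
          apply ENNReal.measurable_ofReal.comp
          apply Continuous.measurable
          exact continuous_sqNorm.comp (continuous_fst.sub continuous_snd)
        rw [lintegral_map hmeascost hpairm]
        have hfun : ∀ ξ : Fin d → ℝ, (fun i => ((γs • N) *ᵥ ξ) i - ξ i)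
            = (γs • N - 1) *ᵥ ξ := by
          intro ξ; funext i
          rw [Matrix.sub_mulVec, Matrix.one_mulVec, Pi.sub_apply]
        simp_rw [hfun]
        rw [← ofReal_integral_eq_lintegral_ofReal (integrable_sqNorm_mulVec hP0 _)
          (Filter.Eventually.of_forall fun ξ => sqNorm_nonneg _), c1]
  -- value of the candidate
  have hv : (∫ ξ, sqNorm (T.mulVec ξ) ∂(P0.map fun ξ => (γs • N) *ᵥ ξ))
      = γs * ρ ^ 2 + γs * (γs • N - 1).trace := by
    rw [integral_map hmeasA.aemeasurable hcT.aestronglyMeasurable]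
    exact c2
  -- upper bound
  set K := γs * ρ ^ 2 + γs * (γs • N - 1).trace with hK
  have hub : ∀ e ∈ wcSet T P0 ρ, e ≤ K := by
    rintro e ⟨P, ⟨hPprob, hPmom, μ, hμprob, hfst, hsnd, hcost⟩, rfl⟩
    haveI := hPprob
    haveI := hμprob
    set g1 : (Fin d → ℝ) × (Fin d → ℝ) → ℝ := fun xy => sqNorm (T *ᵥ xy.1) with hg1
    set g2 : (Fin d → ℝ) × (Fin d → ℝ) → ℝ :=
      fun xy => sqNorm (fun i => xy.1 i - xy.2 i) with hg2
    set g3 : (Fin d → ℝ) × (Fin d → ℝ) → ℝ :=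
      fun xy => xy.2 ⬝ᵥ (γs • N - 1) *ᵥ xy.2 with hg3
    have cont1 : Continuous g1 := by
      exact hcT.comp continuous_fst
    have cont2 : Continuous g2 :=
      continuous_sqNorm.comp (continuous_fst.sub continuous_snd)
    have cont3 : Continuous g3 := (continuous_dotQuad _).comp continuous_snd
    -- integrability of g2
    have ig2 : Integrable g2 μ := by
      refine ⟨cont2.aestronglyMeasurable, ?_⟩
      rw [MeasureTheory.hasFiniteIntegral_iff_norm]
      calc (∫⁻ xy, ENNReal.ofReal ‖g2 xy‖ ∂μ)
          = ∫⁻ xy, ENNReal.ofReal (g2 xy) ∂μ := by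
            apply lintegral_congr; intro xy
            rw [Real.norm_eq_abs, abs_of_nonneg (sqNorm_nonneg _)]
        _ ≤ ENNReal.ofReal (ρ ^ 2) := hcost
        _ < ⊤ := ENNReal.ofReal_lt_top
    -- integrability of g1
    have hlint1 : (∫⁻ xy, ENNReal.ofReal (g1 xy) ∂μ) < ⊤ := by
      have hswap : (∫⁻ xy, ENNReal.ofReal (g1 xy) ∂μ)
          = ∫⁻ x, ENNReal.ofReal (sqNorm (T *ᵥ x)) ∂P := by
        rw [← hfst, lintegral_map hmofsqT measurable_fst]
      rw [hswap]
      have hb : ∀ x : Fin d → ℝ, ENNReal.ofReal (sqNorm (T *ᵥ x))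
          ≤ ENNReal.ofReal ((Tᵀ * T).trace) * ENNReal.ofReal (sqNorm x) := by
        intro x
        rw [← ENNReal.ofReal_mul]
        · apply ENNReal.ofReal_le_ofReal
          rw [sqNorm_mulVec, sqNorm_dot]
          exact quad_le_trace T x
        · exact (trace_mem_opSet T).1
      calc (∫⁻ x, ENNReal.ofReal (sqNorm (T *ᵥ x)) ∂P)
          ≤ ∫⁻ x, ENNReal.ofReal ((Tᵀ * T).trace) * ENNReal.ofReal (sqNorm x) ∂P :=
            lintegral_mono hb
        _ = ENNReal.ofReal ((Tᵀ * T).trace) * ∫⁻ x, ENNReal.ofReal (sqNorm x) ∂P :=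
            lintegral_const_mul' _ _ ENNReal.ofReal_ne_top
        _ < ⊤ := ENNReal.mul_lt_top ENNReal.ofReal_lt_top hPmom
    have ig1 : Integrable g1 μ := by
      refine ⟨cont1.aestronglyMeasurable, ?_⟩
      rw [MeasureTheory.hasFiniteIntegral_iff_norm]
      calc (∫⁻ xy, ENNReal.ofReal ‖g1 xy‖ ∂μ)
          = ∫⁻ xy, ENNReal.ofReal (g1 xy) ∂μ := by
            apply lintegral_congr; intro xy
            rw [Real.norm_eq_abs, abs_of_nonneg (sqNorm_nonneg _)]
        _ < ⊤ := hlint1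
    -- integrability of g3
    have hqint : Integrable (fun y : Fin d → ℝ => y ⬝ᵥ (γs • N - 1) *ᵥ y) P0 :=
      integrable_quadform hP0 _
    have ig3 : Integrable g3 μ := by
      rw [← hsnd] at hqint
      exact (integrable_map_measure
        ((continuous_dotQuad _).aestronglyMeasurable)
        measurable_snd.aemeasurable).mp hqint
    -- pointwise bound
    have hpt : ∀ xy : (Fin d → ℝ) × (Fin d → ℝ),
        g1 xy ≤ γs * g2 xy + γs * g3 xy := by
      intro xy
      exact pointwise_ineq T hγ xy.1 xy.2
    -- integral comparison
    have hstep : (∫ xy, g1 xy ∂μ) ≤ γs * (∫ xy, g2 xy ∂μ) + γs * (∫ xy, g3 xy ∂μ) := by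
      calc (∫ xy, g1 xy ∂μ) ≤ ∫ xy, (γs * g2 xy + γs * g3 xy) ∂μ :=
            integral_mono ig1 ((ig2.const_mul γs).add (ig3.const_mul γs)) hpt
        _ = γs * (∫ xy, g2 xy ∂μ) + γs * (∫ xy, g3 xy ∂μ) := by
            rw [integral_add (ig2.const_mul γs) (ig3.const_mul γs),
              MeasureTheory.integral_const_mul, MeasureTheory.integral_const_mul]
    have hg2bound : (∫ xy, g2 xy ∂μ) ≤ ρ ^ 2 := by
      rw [integral_eq_lintegral_of_nonneg_ae
        (Filter.Eventually.of_forall fun xy => sqNorm_nonneg _)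
        cont2.aestronglyMeasurable]
      calc (∫⁻ xy, ENNReal.ofReal (g2 xy) ∂μ).toReal
          ≤ (ENNReal.ofReal (ρ ^ 2)).toReal :=
            ENNReal.toReal_mono ENNReal.ofReal_ne_top hcost
        _ = ρ ^ 2 := ENNReal.toReal_ofReal (sq_nonneg ρ)
    have hg3val : (∫ xy, g3 xy ∂μ) = (γs • N - 1).trace := by
      have : (∫ xy, g3 xy ∂μ)
          = ∫ y, y ⬝ᵥ (γs • N - 1) *ᵥ y ∂(μ.map Prod.snd) := by
        rw [integral_map measurable_snd.aemeasurable
          ((continuous_dotQuad _).aestronglyMeasurable)]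
      rw [this, hsnd, c3]
    have he : (∫ ξ, sqNorm (T.mulVec ξ) ∂P) = ∫ xy, g1 xy ∂μ := by
      rw [← hfst, integral_map measurable_fst.aemeasurable hcT.aestronglyMeasurable]
    rw [he, hK]
    calc (∫ xy, g1 xy ∂μ) ≤ γs * (∫ xy, g2 xy ∂μ) + γs * (∫ xy, g3 xy ∂μ) := hstep
      _ ≤ γs * ρ ^ 2 + γs * (γs • N - 1).trace := by
          have h1 := mul_le_mul_of_nonneg_left hg2bound (le_of_lt hγpos)
          have h2 : γs * (∫ xy, g3 xy ∂μ) = γs * (γs • N - 1).trace := by rw [hg3val]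
          linarith
  -- conclusion
  have hmem : K ∈ wcSet T P0 ρ := by
    refine ⟨P0.map fun ξ => (γs • N) *ᵥ ξ, hball, hv.symm⟩
  have hsup : sSup (wcSet T P0 ρ) = K :=
    le_antisymm (csSup_le ⟨K, hmem⟩ hub) (le_csSup ⟨K, hub⟩ hmem)
  rw [hmapA]
  refine ⟨hball, ?_, ?_⟩
  · rw [hv, hsup]
  · rw [hsup, hK, hB, htr1]

end MainProof

/-- Attainment of the worst-case distribution: the pushforward of the nominal `P0` under
`ξ ↦ (I − γ*⁻¹ TᵀT)⁻¹ ξ` lies in the `W₂`-ball and attains the worst-case value. -/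
theorem stmt_5 {r d : ℕ} (T : Matrix (Fin r) (Fin d) ℝ) (hT : T ≠ 0)
    (P0 : Measure (Fin d → ℝ)) (hP0 : IsNominal P0) (ρ : ℝ) (hρ : 0 < ρ)
    (γs : ℝ) (hγs : opNormSq T < γs)
    (hγeq : ((((1 : Matrix (Fin r) (Fin r) ℝ) - γs⁻¹ • (T * Tᵀ))⁻¹ - 1) ^ 2).trace = ρ ^ 2)
    (hγuniq : ∀ γ : ℝ, opNormSq T < γ →
      ((((1 : Matrix (Fin r) (Fin r) ℝ) - γ⁻¹ • (T * Tᵀ))⁻¹ - 1) ^ 2).trace = ρ ^ 2 → γ = γs) :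
    MemW2Ball
        (P0.map fun ξ => (((1 : Matrix (Fin d) (Fin d) ℝ) - γs⁻¹ • (Tᵀ * T))⁻¹).mulVec ξ)
        P0 ρ ∧
      (∫ ξ, sqNorm (T.mulVec ξ)
          ∂(P0.map fun ξ =>
              (((1 : Matrix (Fin d) (Fin d) ℝ) - γs⁻¹ • (Tᵀ * T))⁻¹).mulVec ξ)) =
        sSup (wcSet T P0 ρ) ∧
      sSup (wcSet T P0 ρ) =
        γs * ρ ^ 2 +
          γs * (((1 : Matrix (Fin r) (Fin r) ℝ) - γs⁻¹ • (T * Tᵀ))⁻¹ - 1).trace := by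
  exact stmt_5' T hT P0 hP0 ρ hρ γs hγs hγeq
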